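/- Let S and T be monads on a category C and let λ : TS ⇒ ST be a weak distributive law. Define κ := Sμ^T ∘ λT ∘ η^T ST : ST ⇒ ST. Then: (1) κ ∘ κ = κ; (2) κ ∘ λ = λ; (3) κ ∘ η^S η^T = η^S η^T; (4) κ ∘ μ^S μ^T ∘ SλT = μ^S μ^T ∘ SλT ∘ κκ. -/

import Mathlib

open CategoryTheory

universe v u

/-- Raw monad data: an endofunctor together with unit and multiplication components
(the monad laws are not required). -/
structure MonadData (C : Type u) [Category.{v} C] where
  F : C ⥤ C
  unit : ∀ X : C, X ⟶ F.obj X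
  mult : ∀ X : C, F.obj (F.obj X) ⟶ F.obj X

variable {C : Type u} [Category.{v} C]

/-- The data underlying a monad. -/
def CategoryTheory.Monad.data (T : Monad C) : MonadData C where
  F := T.toFunctor
  unit X := T.η.app X
  mult X := T.μ.app X

/-- The monad laws (two unitality axioms and associativity) for raw monad data. -/
def MonadData.IsMonad (A : MonadData C) : Prop :=
  (∀ X : C, A.unit (A.F.obj X) ≫ A.mult X = 𝟙 (A.F.obj X)) ∧
  (∀ X : C, A.F.map (A.unit X) ≫ A.mult X = 𝟙 (A.F.obj X)) ∧
  (∀ X : C, A.F.map (A.mult X) ≫ A.mult X = A.mult (A.F.obj X) ≫ A.mult X)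

/-- Axiom (η+) for a law `l : TS ⇒ ST` of the monad `A` (playing `S`) over `B` (playing `T`). -/
def EtaPlus (A B : MonadData C) (l : (A.F ⋙ B.F) ⟶ (B.F ⋙ A.F)) : Prop :=
  ∀ X : C, B.F.map (A.unit X) ≫ l.app X = A.unit (B.F.obj X)

/-- Axiom (μ+): `λ ∘ Tμ^S = μ^S T ∘ Sλ ∘ λS`. -/
def MuPlus (A B : MonadData C) (l : (A.F ⋙ B.F) ⟶ (B.F ⋙ A.F)) : Prop :=
  ∀ X : C, B.F.map (A.mult X) ≫ l.app X =
    l.app (A.F.obj X) ≫ A.F.map (l.app X) ≫ A.mult (B.F.obj X)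

/-- Axiom (η−): `λ ∘ η^T S = Sη^T`. -/
def EtaMinus (A B : MonadData C) (l : (A.F ⋙ B.F) ⟶ (B.F ⋙ A.F)) : Prop :=
  ∀ X : C, B.unit (A.F.obj X) ≫ l.app X = A.F.map (B.unit X)

/-- Axiom (μ−): `λ ∘ μ^T S = Sμ^T ∘ λT ∘ Tλ`. -/
def MuMinus (A B : MonadData C) (l : (A.F ⋙ B.F) ⟶ (B.F ⋙ A.F)) : Prop :=
  ∀ X : C, B.mult (A.F.obj X) ≫ l.app X =
    B.F.map (l.app X) ≫ l.app (B.F.obj X) ≫ A.F.map (B.mult X)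

/-- A weak distributive law satisfies (η+), (μ+) and (μ−). -/
def IsWDL (A B : MonadData C) (l : (A.F ⋙ B.F) ⟶ (B.F ⋙ A.F)) : Prop :=
  EtaPlus A B l ∧ MuPlus A B l ∧ MuMinus A B l

/-- A distributive law satisfies all four axioms. -/
def IsDL (A B : MonadData C) (l : (A.F ⋙ B.F) ⟶ (B.F ⋙ A.F)) : Prop :=
  EtaPlus A B l ∧ MuPlus A B l ∧ EtaMinus A B l ∧ MuMinus A B l

/-- The natural family `κ := Sμ^T ∘ λT ∘ η^T ST : ST ⇒ ST` associated with a law. -/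
def lawKappa (A B : MonadData C) (l : (A.F ⋙ B.F) ⟶ (B.F ⋙ A.F)) (X : C) :
    A.F.obj (B.F.obj X) ⟶ A.F.obj (B.F.obj X) :=
  B.unit (A.F.obj (B.F.obj X)) ≫ l.app (B.F.obj X) ≫ A.F.map (B.mult X)

/-- The Yang–Baxter equation `σT ∘ Sτ ∘ λR = Rλ ∘ τS ∘ Tσ` for laws
`l : TS ⇒ ST`, `s : SR ⇒ RS`, `t : TR ⇒ RT`. -/
def YangBaxter (Rm Sm Tm : MonadData C)
    (l : (Sm.F ⋙ Tm.F) ⟶ (Tm.F ⋙ Sm.F))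
    (s : (Rm.F ⋙ Sm.F) ⟶ (Sm.F ⋙ Rm.F))
    (t : (Rm.F ⋙ Tm.F) ⟶ (Tm.F ⋙ Rm.F)) : Prop :=
  ∀ X : C, l.app (Rm.F.obj X) ≫ Sm.F.map (t.app X) ≫ s.app (Tm.F.obj X) =
    Tm.F.map (s.app X) ≫ t.app (Sm.F.obj X) ≫ Rm.F.map (l.app X)

/-- The composite monad data `S ∘_λ T = (ST, η^S η^T, μ^S μ^T ∘ SλT)` of a distributive law. -/
def compData (A B : MonadData C) (l : (A.F ⋙ B.F) ⟶ (B.F ⋙ A.F)) : MonadData C where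
  F := B.F ⋙ A.F
  unit X := B.unit X ≫ A.unit (B.F.obj X)
  mult X := A.F.map (l.app (B.F.obj X)) ≫ A.F.map (A.F.map (B.mult X)) ≫ A.mult (B.F.obj X)

/-- The weak composite monad data `S •_λ T` built from a splitting `(K, p, i)` of `κ`. -/
def wcompData (A B : MonadData C) (l : (A.F ⋙ B.F) ⟶ (B.F ⋙ A.F))
    (K : C ⥤ C) (p : (B.F ⋙ A.F) ⟶ K) (i : K ⟶ (B.F ⋙ A.F)) : MonadData C where
  F := K
  unit X := B.unit X ≫ A.unit (B.F.obj X) ≫ p.app X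
  mult X := i.app (K.obj X) ≫ A.F.map (B.F.map (i.app X)) ≫ A.F.map (l.app (B.F.obj X)) ≫
    A.F.map (A.F.map (B.mult X)) ≫ A.mult (B.F.obj X) ≫ p.app X

/-- Lemma 3.7 of the paper. For a weak distributive law
`λ : TS ⇒ ST`, the natural transformation `κ := Sμ^T ∘ λT ∘ η^T ST` satisfies:
(1) `κ ∘ κ = κ`; (2) `κ ∘ λ = λ`; (3) `κ ∘ η^S η^T = η^S η^T`;
(4) `κ ∘ μ^S μ^T ∘ SλT = μ^S μ^T ∘ SλT ∘ κκ`. -/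
theorem kappa_equations {C : Type u} [Category.{v} C] (S T : Monad C)
    (l : (S.toFunctor ⋙ T.toFunctor) ⟶ (T.toFunctor ⋙ S.toFunctor))
    (h : IsWDL S.data T.data l) :
    (∀ X : C, lawKappa S.data T.data l X ≫ lawKappa S.data T.data l X =
      lawKappa S.data T.data l X) ∧
    (∀ X : C, l.app X ≫ lawKappa S.data T.data l X = l.app X) ∧
    (∀ X : C, (S.η.app X ≫ S.map (T.η.app X)) ≫ lawKappa S.data T.data l X =
      S.η.app X ≫ S.map (T.η.app X)) ∧
    (∀ X : C,
      (S.map (l.app (T.obj X)) ≫ S.map (S.map (T.μ.app X)) ≫ S.μ.app (T.obj X)) ≫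
          lawKappa S.data T.data l X =
      (lawKappa S.data T.data l (S.obj (T.obj X)) ≫ S.map (T.map (lawKappa S.data T.data l X))) ≫
        S.map (l.app (T.obj X)) ≫ S.map (S.map (T.μ.app X)) ≫ S.μ.app (T.obj X)) := by
  obtain ⟨hp, hmp, hmm⟩ := h
  have hp' : ∀ X : C, T.map (S.η.app X) ≫ l.app X = S.η.app (T.obj X) := hp
  have hmp' : ∀ X : C, T.map (S.μ.app X) ≫ l.app X =
      l.app (S.obj X) ≫ S.map (l.app X) ≫ S.μ.app (T.obj X) := hmp
  have hmm' : ∀ X : C, T.μ.app (S.obj X) ≫ l.app X =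
      T.map (l.app X) ≫ l.app (T.obj X) ≫ S.map (T.μ.app X) := hmm
  have eT : ∀ {A B : C} (f : A ⟶ B), f ≫ T.η.app B = T.η.app A ≫ T.map f := by
    intro A B f; simpa using T.η.naturality f
  have eS : ∀ {A B : C} (f : A ⟶ B), f ≫ S.η.app B = S.η.app A ≫ S.map f := by
    intro A B f; simpa using S.η.naturality f
  have lN : ∀ {A B : C} (f : A ⟶ B),
      T.map (S.map f) ≫ l.app B = l.app A ≫ S.map (T.map f) := by
    intro A B f; simpa using l.naturality f
  have mS : ∀ {A B : C} (f : A ⟶ B),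
      S.map (S.map f) ≫ S.μ.app B = S.μ.app A ≫ S.map f := by
    intro A B f; simpa using S.μ.naturality f
  have hk : ∀ X : C, lawKappa S.data T.data l X =
      @CategoryStruct.comp C _ (S.obj (T.obj X)) _ _ (T.η.app (S.obj (T.obj X)))
        (l.app (T.obj X) ≫ S.map (T.μ.app X)) := fun X => rfl
  -- (2) κ ∘ λ = λ
  have hlk : ∀ X : C, l.app X ≫ T.η.app (S.obj (T.obj X)) ≫ l.app (T.obj X) ≫
      S.map (T.μ.app X) = l.app X := by
    intro X
    rw [reassoc_of% (eT (l.app X))]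
    rw [← hmm' X]
    simp
  have h2 : ∀ X : C, l.app X ≫ lawKappa S.data T.data l X = l.app X := by
    intro X; rw [hk]; exact hlk X
  -- key lemma: Tκ ≫ λT ≫ Sμ = λT ≫ Sμ
  have hTk : ∀ X : C,
      T.map (T.η.app (S.obj (T.obj X))) ≫ T.map (l.app (T.obj X)) ≫
        T.map (S.map (T.μ.app X)) ≫ l.app (T.obj X) ≫ S.map (T.μ.app X) =
      l.app (T.obj X) ≫ S.map (T.μ.app X) := by
    intro X
    rw [reassoc_of% (lN (show T.obj (T.obj X) ⟶ T.obj X from T.μ.app X))]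
    rw [← S.toFunctor.map_comp, T.assoc, S.toFunctor.map_comp]
    rw [← reassoc_of% (hmm' (T.obj X))]
    simp
  refine ⟨?_, h2, ?_, ?_⟩
  · -- (1) κ ∘ κ = κ
    intro X
    rw [hk X]
    dsimp only [Monad.data]
    simp only [Category.assoc]
    rw [reassoc_of% (eT (S.map (T.μ.app X)))]
    rw [reassoc_of% (lN (show T.obj (T.obj X) ⟶ T.obj X from T.μ.app X))]
    rw [← S.toFunctor.map_comp, T.assoc, S.toFunctor.map_comp]
    rw [reassoc_of% (hlk (T.obj X))]
  · -- (3) κ ∘ ηη = ηη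
    intro X
    rw [hk X]
    dsimp only [Monad.data]
    simp only [Category.assoc]
    rw [reassoc_of% (eT (S.map (T.η.app X)))]
    rw [reassoc_of% (lN (T.η.app X))]
    simp only [← Functor.map_comp, Monad.right_unit, Functor.map_id, Category.comp_id]
    rw [reassoc_of% (eT (S.η.app X))]
    rw [reassoc_of% (hp' X)]
    simp [← eS]
  · -- (4)
    intro X
    have hTk2 : S.map (T.map (T.η.app (S.obj (T.obj X)))) ≫
        S.map (T.map (l.app (T.obj X))) ≫ S.map (T.map (S.map (T.μ.app X))) ≫
        S.map (l.app (T.obj X)) ≫ S.map (S.map (T.μ.app X)) =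
        S.map (l.app (T.obj X)) ≫ S.map (S.map (T.μ.app X)) := by
      simp only [← Functor.map_comp]
      rw [hTk X]
    rw [hk X, hk (S.obj (T.obj X))]
    dsimp only [Monad.data]
    simp only [Functor.map_comp, Category.assoc]
    rw [reassoc_of% hTk2]
    rw [reassoc_of% (eT (S.μ.app (T.obj X)))]
    rw [reassoc_of% (hmp' (T.obj X))]
    rw [← mS (show T.obj (T.obj X) ⟶ T.obj X from T.μ.app X)]
    rw [reassoc_of% (eT (S.map (S.map (T.μ.app X))))]
    rw [reassoc_of% (lN (S.map (T.μ.app X)))]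
    rw [← reassoc_of% (S.toFunctor.map_comp (T.map (S.map (T.μ.app X))) (l.app (T.obj X)))]
    rw [lN (show T.obj (T.obj X) ⟶ T.obj X from T.μ.app X)]
    rw [S.toFunctor.map_comp]
    simp only [Category.assoc]
    rw [← reassoc_of% (S.toFunctor.map_comp (S.map (T.map (T.μ.app X))) (S.map (T.μ.app X)))]
    rw [← S.toFunctor.map_comp, T.assoc, S.toFunctor.map_comp, S.toFunctor.map_comp]
    simp only [Category.assoc]
    rw [reassoc_of% (eT (S.map (l.app (T.obj X))))]
    rw [reassoc_of% (lN (show T.obj (S.obj (T.obj X)) ⟶ S.obj (T.obj (T.obj X)) from l.app (T.obj X)))]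
    rw [← reassoc_of% (S.toFunctor.map_comp (T.map (l.app (T.obj X))) (l.app (T.obj (T.obj X))))]
    rw [← reassoc_of% (S.toFunctor.map_comp (T.map (l.app (T.obj X)) ≫ l.app (T.obj (T.obj X))) (S.map (T.μ.app (T.obj X))))]
    rw [← hmm' (T.obj X)]
    rw [S.toFunctor.map_comp]
    simp only [Category.assoc]
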